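/- Let w ∈ ℤ^n, c ∈ ℤ₊^n with w·c = 0, S₀ := {x ∈ {0,1}^n_3 : w·x = 0}, S₊ := {x ∈ {0,1}^n_3 : w·x > 0}, and d := c + ∑_{x∈S₊} x. Then there exists G ⊆ S₀ with ∑_{x∈G} x = c if and only if there exists H ⊆ {0,1}^n_3 with ∑_{x∈H} x = d. -/
import Mathlib


open Finset

/-- The set of 0-1 vectors in ℤ^n with exactly `k` ones. -/
def cube (n k : ℕ) : Finset (Fin n → ℤ) :=
  ((Finset.univ : Finset (Fin n → Fin 2)).image (fun f i => ((f i : ℕ) : ℤ))).filter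
    (fun x => ∑ i, x i = (k : ℤ))

/-- Standard inner product on ℤ^n. -/
def dot {n : ℕ} (w x : Fin n → ℤ) : ℤ := ∑ i, w i * x i

lemma dot_sum {n : ℕ} (w : Fin n → ℤ) (S : Finset (Fin n → ℤ)) :
    dot w (∑ x ∈ S, x) = ∑ x ∈ S, dot w x := by
  simp only [dot, Finset.sum_apply, Finset.mul_sum]
  exact Finset.sum_comm

lemma dot_add {n : ℕ} (w a b : Fin n → ℤ) : dot w (a + b) = dot w a + dot w b := by
  simp [dot, mul_add, Finset.sum_add_distrib]

theorem stmt_6 (n : ℕ) (w c : Fin n → ℤ) (hc : ∀ i, 0 ≤ c i) (hwc : dot w c = 0) :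
    (∃ G ⊆ (cube n 3).filter (fun x => dot w x = 0), ∑ x ∈ G, x = c) ↔
      (∃ H ⊆ cube n 3,
        ∑ x ∈ H, x = c + ∑ x ∈ (cube n 3).filter (fun x => 0 < dot w x), x) := by
  set Sp := (cube n 3).filter (fun x => 0 < dot w x) with hSpdef
  constructor
  · rintro ⟨G, hG, hGsum⟩
    refine ⟨G ∪ Sp, union_subset (hG.trans (filter_subset _ _)) (filter_subset _ _), ?_⟩
    rw [sum_union, hGsum]
    rw [Finset.disjoint_left]
    intro x hxG hxSp
    have h1 := (mem_filter.mp (hG hxG)).2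
    have h2 := (mem_filter.mp hxSp).2
    exact absurd h1 (ne_of_gt h2)
  · rintro ⟨H, hH, hHsum⟩
    have key : ∑ x ∈ H, dot w x = ∑ x ∈ Sp, dot w x := by
      have h := congrArg (dot w) hHsum
      rw [dot_sum, dot_add, hwc, dot_sum, zero_add] at h
      exact h
    set p : (Fin n → ℤ) → Prop := fun x => 0 < dot w x with hp
    have hsplit : ∑ x ∈ H.filter p, dot w x + ∑ x ∈ H.filter (fun x => ¬ p x), dot w x
        = ∑ x ∈ Sp, dot w x := by
      rw [sum_filter_add_sum_filter_not]; exact key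
    have hpos_sub : H.filter p ⊆ Sp := filter_subset_filter p hH
    have h1 : ∑ x ∈ H.filter p, dot w x ≤ ∑ x ∈ Sp, dot w x :=
      sum_le_sum_of_subset_of_nonneg hpos_sub (fun x hx _ => le_of_lt (mem_filter.mp hx).2)
    have h2 : ∑ x ∈ H.filter (fun x => ¬ p x), dot w x ≤ 0 :=
      sum_nonpos fun x hx => not_lt.mp (mem_filter.mp hx).2
    have hneg0 : ∑ x ∈ H.filter (fun x => ¬ p x), dot w x = 0 := le_antisymm h2 (by linarith)
    have hzero : ∀ x ∈ H.filter (fun x => ¬ p x), dot w x = 0 := by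
      intro x hx
      exact (Finset.sum_eq_zero_iff_of_nonpos
        (fun y hy => not_lt.mp (mem_filter.mp hy).2)).mp hneg0 x hx
    have hfeq : Sp = H.filter p := by
      have hsd : ∑ x ∈ Sp \ H.filter p, dot w x = 0 := by
        have := Finset.sum_sdiff (f := fun x => dot w x) hpos_sub
        linarith
      have hempty : Sp \ H.filter p = ∅ := by
        by_contra hne
        obtain ⟨x, hx⟩ := Finset.nonempty_iff_ne_empty.mpr hne
        have hxSp := (Finset.mem_sdiff.mp hx).1
        have hxpos : 0 < dot w x := (mem_filter.mp hxSp).2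
        have := (Finset.sum_eq_zero_iff_of_nonneg
          (fun y hy => le_of_lt (mem_filter.mp (Finset.mem_sdiff.mp hy).1).2)).mp hsd x hx
        omega
      exact Subset.antisymm (Finset.sdiff_eq_empty_iff_subset.mp hempty) hpos_sub
    refine ⟨H.filter (fun x => ¬ p x), ?_, ?_⟩
    · intro x hx
      exact mem_filter.mpr ⟨hH (mem_filter.mp hx).1, hzero x hx⟩
    · have hvec : ∑ x ∈ H.filter p, x + ∑ x ∈ H.filter (fun x => ¬ p x), x
          = c + ∑ x ∈ Sp, x := by
        rw [sum_filter_add_sum_filter_not]; exact hHsum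
      rw [← hfeq] at hvec
      have := add_right_cancel (a := ∑ x ∈ H.filter (fun x => ¬ p x), x)
        (b := ∑ x ∈ Sp, x) (c := c)
      rw [add_comm] at hvec
      exact this (by rw [hvec, add_comm])
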